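/- The cover time of the circle admits the range representation σ_N = inf{t > 0 : max_{1 ≤ n ≤ N} sup_{s ∈ [0,t]} x_n(s) − min_{1 ≤ n ≤ N} inf_{s ∈ [0,t]} x_n(s) ≥ 2(l − r)}, where both infima are taken in [0,∞] with the convention inf ∅ = ∞. -/
import Mathlib

open scoped NNReal ENNReal

-- helper: upper bound for distance on AddCircle via a representative shift
lemma dist_coe_le_addCircle {p : ℝ} (a b : ℝ) (k : ℤ) {ε : ℝ}
    (h : |a - (b + k * p)| ≤ ε) : dist ((a : ℝ) : AddCircle p) ((b : ℝ) : AddCircle p) ≤ ε := by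
  have hmem : a ∈ (↑·) ⁻¹' Metric.closedBall ((b : ℝ) : AddCircle p) ε := by
    rw [AddCircle.coe_real_preimage_closedBall_eq_iUnion]
    exact Set.mem_iUnion.2 ⟨k, by simpa [Real.dist_eq, zsmul_eq_mul] using h⟩
  simpa using hmem

lemma dist_coe_ex_addCircle {p : ℝ} (a b : ℝ) {ε : ℝ}
    (h : dist ((a : ℝ) : AddCircle p) ((b : ℝ) : AddCircle p) ≤ ε) :
    ∃ k : ℤ, |a - (b + k * p)| ≤ ε := by
  have hmem : a ∈ (↑·) ⁻¹' Metric.closedBall ((b : ℝ) : AddCircle p) ε := by simpa using h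
  rw [AddCircle.coe_real_preimage_closedBall_eq_iUnion] at hmem
  obtain ⟨k, hk⟩ := Set.mem_iUnion.1 hmem
  exact ⟨k, by simpa [Real.dist_eq, zsmul_eq_mul] using hk⟩

/-- **Range representation of the circle cover time.** Let `l > r > 0`, and let
`x 1, …, x N : [0,∞) → ℝ` be continuous paths starting at `0`, projected by
`π : ℝ → ℝ/(2lℤ)` onto the circle of circumference `2l` with its quotient metric.
The cover time with detection radius `r` equals
`inf {t > 0 : max_n sup_{s ∈ [0,t]} x_n(s) - min_n inf_{s ∈ [0,t]} x_n(s) ≥ 2(l-r)}`,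
both infima taken in `[0,∞]` with `inf ∅ = ∞`. -/
theorem circle_coverTime_eq_range_representation (l r : ℝ) (hr : 0 < r) (hlr : r < l)
    (N : ℕ) (hN : 1 ≤ N) (x : Fin N → ℝ → ℝ)
    (hcont : ∀ n, ContinuousOn (x n) (Set.Ici 0)) (hx0 : ∀ n, x n 0 = 0) :
    sInf ((fun t : ℝ≥0 => (t : ℝ≥0∞)) ''
        {t : ℝ≥0 | 0 < t ∧ ∀ z : AddCircle (2 * l),
          ∃ n : Fin N, ∃ s : ℝ≥0, s ≤ t ∧
            dist ((x n (s : ℝ) : ℝ) : AddCircle (2 * l)) z ≤ r})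
      = sInf ((fun t : ℝ≥0 => (t : ℝ≥0∞)) ''
        {t : ℝ≥0 | 0 < t ∧
          (⨆ n : Fin N, sSup ((fun s : ℝ => x n s) '' Set.Icc 0 (t : ℝ)))
            - (⨅ n : Fin N, sInf ((fun s : ℝ => x n s) '' Set.Icc 0 (t : ℝ)))
          ≥ 2 * (l - r)}) := by
  have hl : 0 < l := hr.trans hlr
  have hp : (0 : ℝ) < 2 * l := by linarith
  have : Nonempty (Fin N) := ⟨⟨0, hN⟩⟩
  congr 1
  apply congrArg
  ext t
  simp only [Set.mem_setOf_eq]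
  refine and_congr_right fun _ => ?_
  set T : ℝ := (t : ℝ) with hTdef
  have hT : (0 : ℝ) ≤ T := t.2
  -- basic facts about the images
  set S : Fin N → Set ℝ := fun n => (fun s : ℝ => x n s) '' Set.Icc 0 T with hS
  have hSc : ∀ n, ContinuousOn (x n) (Set.Icc 0 T) := fun n =>
    (hcont n).mono (Set.Icc_subset_Ici_self)
  have hScompact : ∀ n, IsCompact (S n) := fun n =>
    isCompact_Icc.image_of_continuousOn (hSc n)
  have h0mem : ∀ n, (0 : ℝ) ∈ S n := fun n => ⟨0, ⟨le_rfl, hT⟩, hx0 n⟩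
  have hSne : ∀ n, (S n).Nonempty := fun n => ⟨0, h0mem n⟩
  have hSupmem : ∀ n, sSup (S n) ∈ S n := fun n => (hScompact n).sSup_mem (hSne n)
  have hInfmem : ∀ n, sInf (S n) ∈ S n := fun n => (hScompact n).sInf_mem (hSne n)
  have hSup0 : ∀ n, (0 : ℝ) ≤ sSup (S n) := fun n =>
    le_csSup (hScompact n).bddAbove (h0mem n)
  have hInf0 : ∀ n, sInf (S n) ≤ 0 := fun n =>
    csInf_le (hScompact n).bddBelow (h0mem n)
  set M : ℝ := ⨆ n : Fin N, sSup (S n) with hM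
  set m : ℝ := ⨅ n : Fin N, sInf (S n) with hm
  obtain ⟨n₀, hn₀⟩ : ∃ n₀, sSup (S n₀) = M := exists_eq_ciSup_of_finite
  obtain ⟨n₁, hn₁⟩ : ∃ n₁, sInf (S n₁) = m := exists_eq_ciInf_of_finite
  have hleM : ∀ n, sSup (S n) ≤ M := fun n =>
    le_ciSup (f := fun n => sSup (S n)) (Set.Finite.bddAbove (Set.finite_range _)) n
  have hmle : ∀ n, m ≤ sInf (S n) := fun n =>
    ciInf_le (f := fun n => sInf (S n)) (Set.Finite.bddBelow (Set.finite_range _)) n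
  have hM0 : (0 : ℝ) ≤ M := (hSup0 n₀).trans_eq hn₀
  have hm0 : m ≤ 0 := hn₁ ▸ hInf0 n₁
  -- every value in [m, M] is visited
  have visited : ∀ v : ℝ, m ≤ v → v ≤ M → ∃ n : Fin N, ∃ s : ℝ≥0, s ≤ t ∧ x n (s : ℝ) = v := by
    intro v hv1 hv2
    rcases le_total v 0 with hv0 | hv0
    · obtain ⟨s₁, hs₁, hxs₁⟩ := hInfmem n₁
      have hsub : Set.uIcc (0 : ℝ) s₁ ⊆ Set.Icc 0 T := by
        rw [Set.uIcc_of_le hs₁.1]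
        exact Set.Icc_subset_Icc le_rfl hs₁.2
      have := intermediate_value_uIcc ((hSc n₁).mono hsub)
      have hxs₁' : x n₁ s₁ = m := by simpa using hxs₁.trans hn₁
      have hvmem : v ∈ Set.uIcc (x n₁ 0) (x n₁ s₁) := by
        rw [hx0 n₁, hxs₁', Set.uIcc_of_ge hm0]
        exact ⟨hv1, hv0⟩
      obtain ⟨s, hs, hxs⟩ := this hvmem
      have hs' := hsub hs
      refine ⟨n₁, ⟨s, hs'.1⟩, ?_, hxs⟩
      exact (NNReal.coe_le_coe (r₁ := ⟨s, hs'.1⟩)).1 hs'.2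
    · obtain ⟨s₀, hs₀, hxs₀⟩ := hSupmem n₀
      have hsub : Set.uIcc (0 : ℝ) s₀ ⊆ Set.Icc 0 T := by
        rw [Set.uIcc_of_le hs₀.1]
        exact Set.Icc_subset_Icc le_rfl hs₀.2
      have := intermediate_value_uIcc ((hSc n₀).mono hsub)
      have hxs₀' : x n₀ s₀ = M := by simpa using hxs₀.trans hn₀
      have hvmem : v ∈ Set.uIcc (x n₀ 0) (x n₀ s₀) := by
        rw [hx0 n₀, hxs₀', Set.uIcc_of_le hM0]
        exact ⟨hv0, hv2⟩
      obtain ⟨s, hs, hxs⟩ := this hvmem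
      have hs' := hsub hs
      refine ⟨n₀, ⟨s, hs'.1⟩, ?_, hxs⟩
      exact (NNReal.coe_le_coe (r₁ := ⟨s, hs'.1⟩)).1 hs'.2
  constructor
  · -- cover → range
    intro hcov
    by_contra hcon
    push_neg at hcon
    have hlt : M - m < 2 * (l - r) := hcon
    obtain ⟨n, s, hst, hd⟩ := hcov (((M + m) / 2 + l : ℝ) : AddCircle (2 * l))
    set a : ℝ := x n (s : ℝ) with ha
    have haS : a ∈ S n := ⟨(s : ℝ), ⟨s.2, by exact_mod_cast hst⟩, rfl⟩
    have haM : a ≤ M := (le_csSup (hScompact n).bddAbove haS).trans (hleM n)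
    have ham : m ≤ a := (hmle n).trans (csInf_le (hScompact n).bddBelow haS)
    obtain ⟨k, hk⟩ := dist_coe_ex_addCircle a ((M + m) / 2 + l) hd
    rw [abs_le] at hk
    have h1 : (k : ℝ) * (2 * l) < 0 := by linarith [hk.1, hk.2]
    have h2 : (-2 : ℝ) * l < (k : ℝ) * (2 * l) := by linarith [hk.1, hk.2]
    have hk1 : (k : ℝ) < 0 := by nlinarith
    have hk2 : (-1 : ℝ) < (k : ℝ) := by nlinarith
    have : k < 0 := by exact_mod_cast hk1
    have : (-1 : ℤ) < k := by exact_mod_cast hk2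
    omega
  · -- range → cover
    intro hrange z
    induction z using QuotientAddGroup.induction_on with
    | H y =>
    set w : ℝ := toIcoMod hp m y with hw
    have hwI : w ∈ Set.Ico m (m + 2 * l) := toIcoMod_mem_Ico hp m y
    have hwy : ((w : ℝ) : AddCircle (2 * l)) = ((y : ℝ) : AddCircle (2 * l)) := by
      have : w - y = -toIcoDiv hp m y • (2 * l) := toIcoMod_sub_self hp m y
      rw [QuotientAddGroup.eq_iff_sub_mem]
      rw [this]
      exact AddSubgroup.zsmul_mem_zmultiples _ _
    rcases le_total w M with hwM | hwM
    · obtain ⟨n, s, hst, hxs⟩ := visited w hwI.1 hwM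
      refine ⟨n, s, hst, ?_⟩
      rw [hxs, hwy]
      simp [hr.le]
    · rcases le_total w (M + r) with hwr | hwr
      · obtain ⟨n, s, hst, hxs⟩ := visited M (hm0.trans hM0) le_rfl
        refine ⟨n, s, hst, ?_⟩
        rw [hxs, ← hwy]
        exact dist_coe_le_addCircle M w 0 (by rw [abs_le]; constructor <;> push_cast <;> linarith)
      · obtain ⟨n, s, hst, hxs⟩ := visited m le_rfl (hm0.trans hM0)
        refine ⟨n, s, hst, ?_⟩
        rw [hxs, ← hwy]
        refine dist_coe_le_addCircle m w (-1) ?_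
        rw [abs_le]
        constructor <;> push_cast <;> [linarith [hwI.2]; linarith [hrange]]
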